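/- arXiv:1801.01754 — 5 statements merged into one kernel-verified Lean document; each statement's English description precedes it below -/
import Mathlib

section
/- Let k ≥ 5 and D be natural numbers, V a finite set, A : V × V → ℕ a nonnegative integer matrix, and L : V → ℤ/kℤ a layer assignment. Assume: (1) for each v ∈ V, ∑_u A(v,u) ≤ D; (2) for each v with L(v) ∉ {1,3} and each u with A(v,u) ≠ 0, L(u) = L(v) + 1; (3) for each v with L(v) = 1 and each u with A(v,u) ≠ 0, L(u) ∈ {2,3}; (4) for each v with L(v) = 3 and each u with A(v,u) ≠ 0, L(u) ∈ {3,4}, and moreover if L(u) = 3 then every w with A(u,w) ≠ 0 satisfies L(w) = 4; (5) for each v with L(v) ∉ {1,2,3}, ∑_u A(v,u) = 1. Then for every v ∈ V, ∑_u (A^{k-1})(v,u) ≤ 4·D^4. -/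
/-- Exponent bound for the layered digraph lemma. -/
def auxE (k m : ℕ) (l : ZMod k) : ℕ :=
  if l = 1 then min m 4
  else if l = 2 then min m 3
  else if l = 3 then min m 2
  else min (m - (1 - l).val) 4

/-- Exponent bound for a layer-3 vertex all of whose successors are at layer 4. -/
def auxEF (k m : ℕ) : ℕ :=
  min m (1 + min (m - 1 - (k - 3)) 4)

/-- Lemma on layered sparse digraphs (Lemma 3.3 of the paper): under the stated layer
conditions, the number of directed paths of length `k-1` starting at any vertex,
i.e. any row sum of `A^(k-1)`, is at most `4 * D^4`. -/
theorem stmt_2 {V : Type*} [Fintype V] [DecidableEq V]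
    (k D : ℕ) (hk : 5 ≤ k)
    (A : Matrix V V ℕ) (L : V → ZMod k)
    (h1 : ∀ v : V, ∑ u, A v u ≤ D)
    (h2 : ∀ v : V, L v ≠ 1 → L v ≠ 3 →
      ∀ u : V, A v u ≠ 0 → L u = L v + 1)
    (h3 : ∀ v : V, L v = 1 → ∀ u : V, A v u ≠ 0 → L u = 2 ∨ L u = 3)
    (h4 : ∀ v : V, L v = 3 → ∀ u : V, A v u ≠ 0 →
      (L u = 3 ∨ L u = 4) ∧ (L u = 3 → ∀ w : V, A u w ≠ 0 → L w = 4))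
    (h5 : ∀ v : V, L v ≠ 1 → L v ≠ 2 → L v ≠ 3 → ∑ u, A v u = 1) :
    ∀ v : V, ∑ u, (A ^ (k - 1)) v u ≤ 4 * D ^ 4 := by
  intro v
  rcases Nat.eq_zero_or_pos D with rfl | hD
  · -- degenerate case D = 0 : then A = 0
    have hA : A = 0 := by
      ext x y
      have hs := h1 x
      have hy := Finset.single_le_sum (f := fun u => A x u)
        (fun _ _ => Nat.zero_le _) (Finset.mem_univ y)
      simpa using Nat.le_antisymm (le_trans hy hs) (Nat.zero_le _)
    rw [hA, zero_pow (show k - 1 ≠ 0 by omega)]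
    simp
  · have hNZ : NeZero k := ⟨by omega⟩
    -- generic facts about ZMod k, k ≥ 5
    have hne : ∀ a b : ℕ, a < k → b < k → a ≠ b → (a : ZMod k) ≠ (b : ZMod k) := by
      intro a b ha hb hab h
      rw [ZMod.natCast_eq_natCast_iff', Nat.mod_eq_of_lt ha, Nat.mod_eq_of_lt hb] at h
      exact hab h
    have h21 : (2 : ZMod k) ≠ 1 := by exact_mod_cast hne 2 1 (by omega) (by omega) (by omega)
    have h23 : (2 : ZMod k) ≠ 3 := by exact_mod_cast hne 2 3 (by omega) (by omega) (by omega)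
    have h31 : (3 : ZMod k) ≠ 1 := by exact_mod_cast hne 3 1 (by omega) (by omega) (by omega)
    have h32 : (3 : ZMod k) ≠ 2 := by exact_mod_cast hne 3 2 (by omega) (by omega) (by omega)
    have h41 : (4 : ZMod k) ≠ 1 := by exact_mod_cast hne 4 1 (by omega) (by omega) (by omega)
    have h42 : (4 : ZMod k) ≠ 2 := by exact_mod_cast hne 4 2 (by omega) (by omega) (by omega)
    have h43 : (4 : ZMod k) ≠ 3 := by exact_mod_cast hne 4 3 (by omega) (by omega) (by omega)
    have h01 : (0 : ZMod k) ≠ 1 := by exact_mod_cast hne 0 1 (by omega) (by omega) (by omega)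
    have h02 : (0 : ZMod k) ≠ 2 := by exact_mod_cast hne 0 2 (by omega) (by omega) (by omega)
    have h03 : (0 : ZMod k) ≠ 3 := by exact_mod_cast hne 0 3 (by omega) (by omega) (by omega)
    have hval1 : (1 : ZMod k).val = 1 := ZMod.val_one'' (by omega)
    have hval4 : (1 - (4 : ZMod k)).val = k - 3 := by
      have e1 : ((k - 3 : ℕ) : ZMod k) = 1 - 4 := by
        rw [Nat.cast_sub (by omega : 3 ≤ k), ZMod.natCast_self]
        push_cast
        ring
      rw [← e1, ZMod.val_cast_of_lt (by omega)]
    have hmono : ∀ {a b : ℕ}, a ≤ b → D ^ a ≤ D ^ b := fun h => Nat.pow_le_pow_right hD h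
    -- the recurrence for row sums
    have hrec : ∀ (m : ℕ) (w : V),
        ∑ u, (A ^ (m + 1)) w u = ∑ u, A w u * ∑ x, (A ^ m) u x := by
      intro m w
      rw [pow_succ']
      simp only [Matrix.mul_apply]
      rw [Finset.sum_comm]
      simp only [← Finset.mul_sum]
    have hbound : ∀ (m : ℕ) (w : V) (e : ℕ),
        (∀ u, A w u ≠ 0 → ∑ x, (A ^ m) u x ≤ D ^ e) →
        ∑ u, A w u * ∑ x, (A ^ m) u x ≤ (∑ u, A w u) * D ^ e := by
      intro m w e h
      rw [Finset.sum_mul]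
      apply Finset.sum_le_sum
      intro u _
      by_cases h0 : A w u = 0
      · simp [h0]
      · exact Nat.mul_le_mul_left _ (h u h0)
    have hstep : ∀ (m : ℕ) (w : V) (e : ℕ),
        (∀ u, A w u ≠ 0 → ∑ x, (A ^ m) u x ≤ D ^ e) →
        ∑ u, (A ^ (m + 1)) w u ≤ D ^ (e + 1) := by
      intro m w e h
      rw [hrec m w]
      calc ∑ u, A w u * ∑ x, (A ^ m) u x ≤ (∑ u, A w u) * D ^ e := hbound m w e h
        _ ≤ D * D ^ e := Nat.mul_le_mul_right _ (h1 w)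
        _ = D ^ (e + 1) := by rw [pow_succ, mul_comm]
    have hstep1 : ∀ (m : ℕ) (w : V) (e : ℕ), L w ≠ 1 → L w ≠ 2 → L w ≠ 3 →
        (∀ u, A w u ≠ 0 → ∑ x, (A ^ m) u x ≤ D ^ e) →
        ∑ u, (A ^ (m + 1)) w u ≤ D ^ e := by
      intro m w e hw1 hw2 hw3 h
      rw [hrec m w]
      calc ∑ u, A w u * ∑ x, (A ^ m) u x ≤ (∑ u, A w u) * D ^ e := hbound m w e h
        _ = D ^ e := by rw [h5 w hw1 hw2 hw3, one_mul]
    -- the key inductive claim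
    have key : ∀ m : ℕ, m ≤ k - 1 → ∀ w : V,
        (∑ u, (A ^ m) w u ≤ D ^ auxE k m (L w)) ∧
        (L w = 3 → (∀ x : V, A w x ≠ 0 → L x = 4) →
          ∑ u, (A ^ m) w u ≤ D ^ auxEF k m) := by
      intro m
      induction m with
      | zero =>
        intro _ w
        have h0 : ∑ u, (A ^ 0) w u = 1 := by simp [Matrix.one_apply]
        exact ⟨by rw [h0]; exact Nat.one_le_pow _ _ hD,
          fun _ _ => by rw [h0]; exact Nat.one_le_pow _ _ hD⟩
      | succ m ih =>
        intro hm
        have ih' := ih (by omega)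
        intro w
        have hE4 : auxE k m (4 : ZMod k) = min (m - (k - 3)) 4 := by
          simp [auxE, h41, h42, h43, hval4]
        have hE1 : ∀ n : ℕ, auxE k n (1 : ZMod k) = min n 4 := by
          intro n; simp [auxE]
        have hE2 : ∀ n : ℕ, auxE k n (2 : ZMod k) = min n 3 := by
          intro n; simp [auxE, h21]
        have hE3 : ∀ n : ℕ, auxE k n (3 : ZMod k) = min n 2 := by
          intro n; simp [auxE, h31, h32]
        constructor
        · -- main bound
          by_cases hv1 : L w = 1
          · have hb : ∀ u, A w u ≠ 0 → ∑ x, (A ^ m) u x ≤ D ^ (min m 3) := by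
              intro u hu
              rcases h3 w hv1 u hu with h | h
              · have := (ih' u).1
                rw [h] at this
                refine le_trans this (le_of_eq (by rw [hE2 m]))
              · have := (ih' u).1
                rw [h] at this
                refine le_trans this (hmono ?_)
                rw [hE3 m]
                omega
            refine le_trans (hstep m w _ hb) (hmono ?_)
            rw [hv1, hE1]
            omega
          · by_cases hv2 : L w = 2
            · have hb : ∀ u, A w u ≠ 0 → ∑ x, (A ^ m) u x ≤ D ^ (min m 2) := by
                intro u hu
                have h := h2 w (by rw [hv2]; exact h21) (by rw [hv2]; exact h23) u hu
                rw [hv2] at h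
                have := (ih' u).1
                rw [h] at this
                refine le_trans this (le_of_eq ?_)
                have h2add : (2 : ZMod k) + 1 = 3 := by ring
                rw [h2add, hE3 m]
              refine le_trans (hstep m w _ hb) (hmono ?_)
              rw [hv2, hE2]
              omega
            · by_cases hv3 : L w = 3
              · have hb : ∀ u, A w u ≠ 0 → ∑ x, (A ^ m) u x ≤
                    D ^ (max (auxEF k m) (min (m - (k - 3)) 4)) := by
                  intro u hu
                  obtain ⟨h34, hforce⟩ := h4 w hv3 u hu
                  rcases h34 with h | h
                  · exact le_trans ((ih' u).2 h (hforce h)) (hmono (le_max_left _ _))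
                  · have := (ih' u).1
                    rw [h, hE4] at this
                    exact le_trans this (hmono (le_max_right _ _))
                refine le_trans (hstep m w _ hb) (hmono ?_)
                rw [hv3, hE3]
                simp only [auxEF]
                omega
              · by_cases hv0 : L w = 0
                · have hb : ∀ u, A w u ≠ 0 → ∑ x, (A ^ m) u x ≤ D ^ (min m 4) := by
                    intro u hu
                    have h := h2 w hv1 hv3 u hu
                    rw [hv0, zero_add] at h
                    have := (ih' u).1
                    rw [h] at this
                    refine le_trans this (le_of_eq (by rw [hE1 m]))
                  refine le_trans (hstep1 m w _ hv1 hv2 hv3 hb) (hmono ?_)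
                  rw [hv0]
                  have hE0 : auxE k (m + 1) (0 : ZMod k) = min (m + 1 - 1) 4 := by
                    simp [auxE, h01, h02, h03, hval1]
                  rw [hE0]
                  omega
                · -- generic non-window layer
                  set l := L w with hl
                  have hx0 : (1 : ZMod k) - l ≠ 0 := fun h => hv1 (sub_eq_zero.mp h).symm
                  have hd1 : 1 ≤ ((1 : ZMod k) - l).val :=
                    Nat.pos_of_ne_zero fun h => hx0 ((ZMod.val_eq_zero _).mp h)
                  have hx1 : (1 : ZMod k) - l ≠ 1 := fun h => hv0 (sub_eq_self.mp h)
                  have hdlt : ((1 : ZMod k) - l).val < k := ZMod.val_lt _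
                  have hd2 : 2 ≤ ((1 : ZMod k) - l).val := by
                    rcases Nat.lt_or_ge ((1 : ZMod k) - l).val 2 with h | h
                    · exfalso
                      have hv : ((1 : ZMod k) - l).val = 1 := by omega
                      apply hx1
                      have := ZMod.natCast_rightInverse (n := k) (1 - l)
                      rw [hv] at this
                      simpa using this.symm
                    · exact h
                  have ha1 : l + 1 ≠ 1 := fun h => hv0 (by linear_combination h)
                  have ha2 : l + 1 ≠ 2 := fun h => hv1 (by linear_combination h)
                  have ha3 : l + 1 ≠ 3 := fun h => hv2 (by linear_combination h)
                  have hsub : ((1 : ZMod k) - (l + 1)).val = ((1 : ZMod k) - l).val - 1 := by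
                    have hcv : (((1 : ZMod k) - l).val : ZMod k) = 1 - l :=
                      ZMod.natCast_rightInverse _
                    have he : (1 : ZMod k) - (l + 1) = ((((1 : ZMod k) - l).val - 1 : ℕ) : ZMod k) := by
                      rw [Nat.cast_sub hd1, hcv]
                      push_cast
                      ring
                    rw [he, ZMod.val_cast_of_lt (by omega)]
                  have hb : ∀ u, A w u ≠ 0 → ∑ x, (A ^ m) u x ≤
                      D ^ (min (m - (((1 : ZMod k) - l).val - 1)) 4) := by
                    intro u hu
                    have h := h2 w hv1 hv3 u hu
                    have := (ih' u).1
                    rw [h, ← hl] at this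
                    refine le_trans this (le_of_eq ?_)
                    simp only [auxE, if_neg ha1, if_neg ha2, if_neg ha3, hsub]
                  refine le_trans (hstep1 m w _ hv1 hv2 hv3 hb) (hmono ?_)
                  simp only [auxE, if_neg hv1, if_neg hv2, if_neg hv3]
                  omega
        · -- forced bound for layer-3 vertices with all successors at layer 4
          intro _ hforce
          have hb : ∀ u, A w u ≠ 0 → ∑ x, (A ^ m) u x ≤ D ^ (min (m - (k - 3)) 4) := by
            intro u hu
            have h := hforce u hu
            have := (ih' u).1
            rw [h, hE4] at this
            exact this
          refine le_trans (hstep m w _ hb) (hmono ?_)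
          simp only [auxEF]
          omega
    -- conclusion
    have hfin := (key (k - 1) le_rfl v).1
    have hle : auxE k (k - 1) (L v) ≤ 4 := by
      unfold auxE
      split_ifs <;> omega
    calc ∑ u, (A ^ (k - 1)) v u ≤ D ^ auxE k (k - 1) (L v) := hfin
      _ ≤ D ^ 4 := hmono hle
      _ ≤ 4 * D ^ 4 := Nat.le_mul_of_pos_left _ (by omega)
end

section
/- Let k ≥ 5 and D be natural numbers, V a nonempty finite set, A : V × V → ℕ a nonnegative integer matrix, and L : V → ℤ/kℤ a layer assignment satisfying: (1) for each v ∈ V, ∑_u A(v,u) ≤ D; (2) for each v with L(v) ∉ {1,3} and each u with A(v,u) ≠ 0, L(u) = L(v) + 1; (3) for each v with L(v) = 1 and each u with A(v,u) ≠ 0, L(u) ∈ {2,3}; (4) for each v with L(v) = 3 and each u with A(v,u) ≠ 0, L(u) ∈ {3,4}, and moreover if L(u) = 3 then every w with A(u,w) ≠ 0 satisfies L(w) = 4; (5) for each v with L(v) ∉ {1,2,3}, ∑_u A(v,u) = 1. If λ ≥ 0 is a real number and w is a vector with all entries strictly positive such that A·w = λ·w (viewing A as a real matrix), then λ^{k-1}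 ≤ 4·D^4. -/
/-- Under the layer conditions of Lemma 3.3, any nonnegative eigenvalue `λ` of `A`
admitting a strictly positive eigenvector satisfies `λ^(k-1) ≤ 4 * D^4`. -/
theorem stmt_3 {V : Type*} [Fintype V] [Nonempty V] [DecidableEq V]
    (k D : ℕ) (hk : 5 ≤ k)
    (A : Matrix V V ℕ) (L : V → ZMod k)
    (h1 : ∀ v : V, ∑ u, A v u ≤ D)
    (h2 : ∀ v : V, L v ≠ 1 → L v ≠ 3 →
      ∀ u : V, A v u ≠ 0 → L u = L v + 1)
    (h3 : ∀ v : V, L v = 1 → ∀ u : V, A v u ≠ 0 → L u = 2 ∨ L u = 3)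
    (h4 : ∀ v : V, L v = 3 → ∀ u : V, A v u ≠ 0 →
      (L u = 3 ∨ L u = 4) ∧ (L u = 3 → ∀ w : V, A u w ≠ 0 → L w = 4))
    (h5 : ∀ v : V, L v ≠ 1 → L v ≠ 2 → L v ≠ 3 → ∑ u, A v u = 1)
    (lam : ℝ) (hlam : 0 ≤ lam) (w : V → ℝ) (hw : ∀ v, 0 < w v)
    (heig : ∀ v : V, ∑ u, (A v u : ℝ) * w u = lam * w v) :
    lam ^ (k - 1) ≤ 4 * (D : ℝ) ^ 4 := by
  classical
  haveI : NeZero k := ⟨by omega⟩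
  -- trivial case D = 0
  rcases Nat.eq_zero_or_pos D with hD | hD
  · have hA : ∀ v u, A v u = 0 := by
      intro v u
      have h := h1 v
      rw [hD, Nat.le_zero, Finset.sum_eq_zero_iff] at h
      exact h u (Finset.mem_univ u)
    have hl0 : lam = 0 := by
      have hx : lam * w (Classical.arbitrary V) = 0 := by
        rw [← heig]; simp [hA]
      rcases mul_eq_zero.mp hx with h | h
      · exact h
      · exact absurd h (hw _).ne'
    rw [hl0, hD, zero_pow (by omega : k - 1 ≠ 0)]
    norm_num
  have hD1 : (1:ℝ) ≤ (D:ℝ) := by exact_mod_cast hD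
  have hD4 : (1:ℝ) ≤ (D:ℝ)^4 := by
    calc (1:ℝ) = 1^4 := by norm_num
      _ ≤ (D:ℝ)^4 := pow_le_pow_left₀ zero_le_one hD1 4
  -- trivial case lam ≤ 1
  rcases le_or_gt lam 1 with hl1 | hl1
  · calc lam ^ (k-1) ≤ 1 := pow_le_one₀ hlam hl1
      _ ≤ 4 * (D:ℝ)^4 := by nlinarith
  have hlam0 : 0 < lam := lt_trans one_pos hl1
  -- nonzero rows
  have rownz : ∀ x : V, ∃ u, A x u ≠ 0 := by
    intro x
    by_contra hc
    push_neg at hc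
    have h0 : lam * w x = 0 := by rw [← heig x]; simp [hc]
    exact absurd h0 (ne_of_gt (mul_pos hlam0 (hw x)))
  set P : ZMod k → Prop := fun x => x = 1 ∨ x = 2 ∨ x = 3 with hP
  -- greedy step
  have step : ∀ x : V, ∃ y : V, A x y ≠ 0 ∧
      lam * w x ≤ (if P (L x) then (D:ℝ) else 1) * w y := by
    intro x
    obtain ⟨u₀, hu₀⟩ := rownz x
    have hs : (Finset.univ.filter fun u => A x u ≠ 0).Nonempty :=
      ⟨u₀, by simp [hu₀]⟩
    obtain ⟨y, hy, hymax⟩ := Finset.exists_max_image _ w hs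
    have hyA : A x y ≠ 0 := by simpa using (Finset.mem_filter.mp hy).2
    refine ⟨y, hyA, ?_⟩
    have hsum : lam * w x ≤ ((∑ u, A x u : ℕ) : ℝ) * w y := by
      rw [← heig x]
      calc ∑ u, (A x u : ℝ) * w u ≤ ∑ u, (A x u : ℝ) * w y := by
            refine Finset.sum_le_sum fun u _ => ?_
            rcases eq_or_ne (A x u) 0 with h0 | h0
            · simp [h0]
            · exact mul_le_mul_of_nonneg_left (hymax u (by simp [h0])) (by positivity)
        _ = ((∑ u, A x u : ℕ) : ℝ) * w y := by rw [← Finset.sum_mul]; push_cast; ring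
    by_cases hPx : P (L x)
    · rw [if_pos hPx]
      refine hsum.trans (mul_le_mul_of_nonneg_right ?_ (hw y).le)
      exact_mod_cast h1 x
    · rw [if_neg hPx]
      have e1 : L x ≠ 1 := fun h => hPx (Or.inl h)
      have e2 : L x ≠ 2 := fun h => hPx (Or.inr (Or.inl h))
      have e3 : L x ≠ 3 := fun h => hPx (Or.inr (Or.inr h))
      rw [h5 x e1 e2 e3] at hsum
      simpa using hsum
  choose f hf hf2 using step
  obtain ⟨v₀, hv₀⟩ := Finite.exists_max w
  set seq : ℕ → V := fun n => f^[n] v₀ with hseqdef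
  have hseq : ∀ n, seq (n+1) = f (seq n) := fun n => Function.iterate_succ_apply' f n v₀
  set ℓ : ℕ → ZMod k := fun n => L (seq n) with hℓ
  have hAseq : ∀ n, A (seq n) (seq (n+1)) ≠ 0 := by
    intro n; rw [hseq]; exact hf (seq n)
  -- transition facts
  have F1 : ∀ n, ℓ n ≠ 1 → ℓ n ≠ 3 → ℓ (n+1) = ℓ n + 1 :=
    fun n ha hb => h2 _ ha hb _ (hAseq n)
  have F2 : ∀ n, ℓ n = 1 → ℓ (n+1) = 2 ∨ ℓ (n+1) = 3 :=
    fun n h => h3 _ h _ (hAseq n)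
  have F3a : ∀ n, ℓ n = 3 → ℓ (n+1) = 3 ∨ ℓ (n+1) = 4 :=
    fun n h => (h4 _ h _ (hAseq n)).1
  have F3b : ∀ n, ℓ n = 3 → ℓ (n+1) = 3 → ℓ (n+2) = 4 :=
    fun n h h' => (h4 _ h _ (hAseq n)).2 h' _ (hAseq (n+1))
  -- cast injectivity facts
  have castinj : ∀ a b : ℕ, a < k → b < k → ((a:ℕ):ZMod k) = ((b:ℕ):ZMod k) → a = b := by
    intro a b ha hb h
    rw [← ZMod.val_cast_of_lt ha, ← ZMod.val_cast_of_lt hb, h]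
  have ne21 : (2:ZMod k) ≠ 1 := by
    intro h
    have : (2:ℕ) = 1 := castinj 2 1 (by omega) (by omega) (by exact_mod_cast h)
    omega
  have ne23 : (2:ZMod k) ≠ 3 := by
    intro h
    have : (2:ℕ) = 3 := castinj 2 3 (by omega) (by omega) (by exact_mod_cast h)
    omega
  have hPns : ∀ m : ℕ, 4 ≤ m → m ≤ k → ¬ P ((m : ℕ) : ZMod k) := by
    intro m h4m hmk hPm
    rcases eq_or_lt_of_le hmk with heq | hlt
    · subst heq
      rw [ZMod.natCast_self] at hPm
      rcases hPm with h | h | h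
      · exact absurd (castinj 0 1 (by omega) (by omega) (by exact_mod_cast h)) (by omega)
      · exact absurd (castinj 0 2 (by omega) (by omega) (by exact_mod_cast h)) (by omega)
      · exact absurd (castinj 0 3 (by omega) (by omega) (by exact_mod_cast h)) (by omega)
    · rcases hPm with h | h | h
      · exact absurd (castinj m 1 hlt (by omega) (by exact_mod_cast h)) (by omega)
      · exact absurd (castinj m 2 hlt (by omega) (by exact_mod_cast h)) (by omega)
      · exact absurd (castinj m 3 hlt (by omega) (by exact_mod_cast h)) (by omega)
  -- run lemma: once at layer 4, the path proceeds deterministically through layers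
  have run : ∀ i, ℓ i = 4 → ∀ j, j ≤ k - 4 → ℓ (i + j) = ((4 + j : ℕ) : ZMod k) := by
    intro i h4i j
    induction j with
    | zero => intro _; simpa using h4i
    | succ j ih =>
      intro hj
      have hx := ih (by omega)
      have hlt : 4 + j < k := by omega
      have hne1 : ℓ (i + j) ≠ 1 := by
        rw [hx]; intro h
        exact absurd (castinj (4+j) 1 hlt (by omega) (by exact_mod_cast h)) (by omega)
      have hne3 : ℓ (i + j) ≠ 3 := by
        rw [hx]; intro h
        exact absurd (castinj (4+j) 3 hlt (by omega) (by exact_mod_cast h)) (by omega)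
      rw [show i + (j+1) = (i+j) + 1 by ring, F1 (i+j) hne1 hne3, hx]
      push_cast; ring
  have nonspec : ∀ i, ℓ i = 4 → ∀ j, j ≤ k - 4 → ¬ P (ℓ (i + j)) := by
    intro i h4i j hj
    rw [run i h4i j hj]
    exact hPns (4+j) (by omega) (by omega)
  -- from a special layer one reaches layer 4 within 4 steps
  have case3 : ∀ i, ℓ i = 3 → ∃ d, 1 ≤ d ∧ d ≤ 2 ∧ ℓ (i + d) = 4 := by
    intro i h
    rcases F3a i h with h' | h'
    · exact ⟨2, by omega, by omega, F3b i h h'⟩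
    · exact ⟨1, le_refl 1, by omega, h'⟩
  have case2 : ∀ i, ℓ i = 2 → ∃ d, 1 ≤ d ∧ d ≤ 3 ∧ ℓ (i + d) = 4 := by
    intro i h
    have h1' : ℓ (i+1) = 3 := by
      rw [F1 i (by rw [h]; exact ne21) (by rw [h]; exact ne23), h]
      norm_num
    obtain ⟨d, hd1, hd2, hd4⟩ := case3 (i+1) h1'
    exact ⟨d+1, by omega, by omega, by rw [show i+(d+1) = (i+1)+d by ring]; exact hd4⟩
  have lemB : ∀ i, P (ℓ i) → ∃ d, 1 ≤ d ∧ d ≤ 4 ∧ ℓ (i + d) = 4 := by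
    intro i hPi
    rcases hPi with h | h | h
    · rcases F2 i h with h' | h'
      · obtain ⟨d, hd1, hd2, hd4⟩ := case2 (i+1) h'
        exact ⟨d+1, by omega, by omega, by rw [show i+(d+1) = (i+1)+d by ring]; exact hd4⟩
      · obtain ⟨d, hd1, hd2, hd4⟩ := case3 (i+1) h'
        exact ⟨d+1, by omega, by omega, by rw [show i+(d+1) = (i+1)+d by ring]; exact hd4⟩
    · obtain ⟨d, hd1, hd2, hd4⟩ := case2 i h
      exact ⟨d, hd1, by omega, hd4⟩
    · obtain ⟨d, hd1, hd2, hd4⟩ := case3 i h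
      exact ⟨d, hd1, by omega, hd4⟩
  -- main chain inequality
  have key : ∀ n, lam ^ n * w v₀ ≤
      (∏ i ∈ Finset.range n, (if P (ℓ i) then (D:ℝ) else 1)) * w (seq n) := by
    intro n
    induction n with
    | zero => simp [hseqdef]
    | succ n ih =>
      have hpn : (0:ℝ) ≤ ∏ i ∈ Finset.range n, (if P (ℓ i) then (D:ℝ) else 1) :=
        Finset.prod_nonneg fun i _ => by split <;> positivity
      calc lam ^ (n+1) * w v₀ = lam * (lam ^ n * w v₀) := by ring
        _ ≤ lam * ((∏ i ∈ Finset.range n, (if P (ℓ i) then (D:ℝ) else 1)) * w (seq n)) :=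
            mul_le_mul_of_nonneg_left ih hlam
        _ = (∏ i ∈ Finset.range n, (if P (ℓ i) then (D:ℝ) else 1)) * (lam * w (seq n)) := by
            ring
        _ ≤ (∏ i ∈ Finset.range n, (if P (ℓ i) then (D:ℝ) else 1)) *
              ((if P (ℓ n) then (D:ℝ) else 1) * w (seq (n+1))) := by
            refine mul_le_mul_of_nonneg_left ?_ hpn
            rw [hseq n]; exact hf2 (seq n)
        _ = (∏ i ∈ Finset.range (n+1), (if P (ℓ i) then (D:ℝ) else 1)) * w (seq (n+1)) := by
            rw [Finset.prod_range_succ]; ring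
  have hfin : lam ^ (k-1) ≤ ∏ i ∈ Finset.range (k-1), (if P (ℓ i) then (D:ℝ) else 1) := by
    have h := key (k-1)
    have hpn : (0:ℝ) ≤ ∏ i ∈ Finset.range (k-1), (if P (ℓ i) then (D:ℝ) else 1) :=
      Finset.prod_nonneg fun i _ => by split <;> positivity
    have h2' := h.trans (mul_le_mul_of_nonneg_left (hv₀ (seq (k-1))) hpn)
    exact (mul_le_mul_iff_left₀ (hw v₀)).mp h2'
  set S : Finset ℕ := (Finset.range (k-1)).filter (fun i => P (ℓ i)) with hSdef
  have hprod : (∏ i ∈ Finset.range (k-1), (if P (ℓ i) then (D:ℝ) else 1)) = (D:ℝ) ^ S.card := by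
    rw [Finset.prod_ite, Finset.prod_const, Finset.prod_const, one_pow, mul_one]
  -- at most 4 special indices
  have hcard : S.card ≤ 4 := by
    rcases S.eq_empty_or_nonempty with hSe | hSne
    · simp [hSe]
    obtain ⟨i₀, hi₀mem, hi₀min⟩ := S.exists_min_image id hSne
    have hi₀ : i₀ < k - 1 ∧ P (ℓ i₀) := by
      rw [hSdef, Finset.mem_filter, Finset.mem_range] at hi₀mem; exact hi₀mem
    obtain ⟨d, hd1, hd4, h4d⟩ := lemB i₀ hi₀.2
    by_cases hcase : 2 ≤ i₀ + d
    · have hsub : S ⊆ Finset.Ico i₀ (i₀ + d) := by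
        intro m hm
        have hmr : m < k - 1 ∧ P (ℓ m) := by
          rw [hSdef, Finset.mem_filter, Finset.mem_range] at hm; exact hm
        have him : i₀ ≤ m := hi₀min m hm
        rw [Finset.mem_Ico]
        refine ⟨him, ?_⟩
        by_contra hge
        push_neg at hge
        have hns := nonspec (i₀+d) h4d (m - (i₀+d)) (by omega)
        rw [show (i₀+d) + (m - (i₀+d)) = m by omega] at hns
        exact hns hmr.2
      calc S.card ≤ (Finset.Ico i₀ (i₀+d)).card := Finset.card_le_card hsub
        _ = d := by rw [Nat.card_Ico]; omega
        _ ≤ 4 := hd4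
    · -- i₀ = 0 and d = 1
      have hid : i₀ + d = 1 := by omega
      rw [hid] at h4d
      have hsub : S ⊆ {0, k-2} := by
        intro m hm
        have hmr : m < k - 1 ∧ P (ℓ m) := by
          rw [hSdef, Finset.mem_filter, Finset.mem_range] at hm; exact hm
        rw [Finset.mem_insert, Finset.mem_singleton]
        by_contra hc
        push_neg at hc
        have hm1 : 1 ≤ m := by omega
        have hm3 : m ≤ k - 3 := by omega
        have hns := nonspec 1 h4d (m - 1) (by omega)
        rw [show 1 + (m - 1) = m by omega] at hns
        exact hns hmr.2
      calc S.card ≤ ({0, k-2} : Finset ℕ).card := Finset.card_le_card hsub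
        _ ≤ 2 := by
            refine (Finset.card_insert_le _ _).trans ?_
            simp
        _ ≤ 4 := by omega
  calc lam ^ (k-1) ≤ (D:ℝ) ^ S.card := hfin.trans_eq hprod
    _ ≤ (D:ℝ) ^ 4 := pow_le_pow_right₀ hD1 hcard
    _ ≤ 4 * (D:ℝ) ^ 4 := by nlinarith
end

section
/- Let n, k ≥ 6 be coprime integers, let n̄ and k̄ be defined by the rule m̄ = (m−1)/2 if m is odd, m̄ = (m−2)/2 if m ≡ 0 (mod 4), m̄ = (m−4)/2 if m ≡ 2 (mod 4), and let c be a positive integer satisfying c·n·k̄ ≡ 1 (mod k) and c·k·n̄ ≡ 1 (mod n). Define a directed graph Γ̄ on the vertex set (ℤ/nℤ) × (ℤ/kℤ) with an oriented edge from (i,j) to (i',j') if and only if either (i' = i + c and j' = j + c), or ((i,j) ∈ {(0,1), (0,−1), (1,0), (−1,0)} and (i',j') = (c,c)), where c is reduced modulo n and modulo k respectively. Then every directed cycle in Γ̄ has length ℓ satisfying 7·ℓ > n·k. -/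
/-- The residue `m̄` used in Theorem 4.1. -/
def bar (m : ℕ) : ℕ :=
  if m % 2 = 1 then (m - 1) / 2
  else if m % 4 = 0 then (m - 2) / 2
  else (m - 4) / 2

lemma bar_facts (k : ℕ) (hk : 6 ≤ k) : 1 ≤ bar k ∧ 2 * bar k < k ∧ k < 7 * bar k := by
  unfold bar; split_ifs <;> omega

lemma aux_lem (n k c t : ℕ) (hk : 6 ≤ k) (hn : 0 < n)
    (hc1 : c * n * bar k ≡ 1 [MOD k]) (hdvd : n ∣ t) (ht : 1 ≤ t)
    (hmod : t * c ≡ 1 [MOD k] ∨ t * c ≡ k - 1 [MOD k]) : n * k < 7 * t := by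
  obtain ⟨hb1, hb2, hb3⟩ := bar_facts k hk
  obtain ⟨s, rfl⟩ := hdvd
  have hs1 : 1 ≤ s := by
    rcases Nat.eq_zero_or_pos s with rfl | h
    · simp at ht
    · exact h
  have hle : s % k ≤ s := Nat.mod_le s k
  have h7 : k < 7 * s := by
    rcases hmod with h | h
    · have hcalc : s ≡ bar k [MOD k] := by
        calc s = s * 1 := (mul_one s).symm
          _ ≡ s * (c * n * bar k) [MOD k] := (hc1.mul_left s).symm
          _ = n * s * c * bar k := by ring
          _ ≡ 1 * bar k [MOD k] := h.mul_right _
          _ = bar k := one_mul _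
      have h1 : s % k = bar k % k := hcalc
      have h2 : bar k % k = bar k := Nat.mod_eq_of_lt (by omega)
      omega
    · have hcalc : s ≡ (k - 1) * bar k [MOD k] := by
        calc s = s * 1 := (mul_one s).symm
          _ ≡ s * (c * n * bar k) [MOD k] := (hc1.mul_left s).symm
          _ = n * s * c * bar k := by ring
          _ ≡ (k - 1) * bar k [MOD k] := h.mul_right _
      have hexp : (k - 1) * bar k = k * (bar k - 1) + (k - bar k) := by
        zify [show 1 ≤ k by omega, hb1, show bar k ≤ k by omega]; ring
      have h2 : ((k - 1) * bar k) % k = (k - bar k) % k := by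
        rw [hexp, Nat.mul_add_mod]
      have h1 : s % k = ((k - 1) * bar k) % k := hcalc
      have h3 : (k - bar k) % k = k - bar k := Nat.mod_eq_of_lt (by omega)
      omega
  calc n * k < n * (7 * s) := Nat.mul_lt_mul_of_pos_left h7 hn
    _ = 7 * (n * s) := by ring

/-- Lemma 4.2: every directed cycle of the collapsed graph `Γ̄_{n,k}` on
`(ℤ/n) × (ℤ/k)` has length `ℓ` with `7ℓ > nk`. -/
theorem stmt_7 (n k : ℕ) (hn : 6 ≤ n) (hk : 6 ≤ k) (hnk : Nat.Coprime n k)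
    (c : ℕ) (hc : 0 < c)
    (hc1 : c * n * bar k ≡ 1 [MOD k]) (hc2 : c * k * bar n ≡ 1 [MOD n])
    (ℓ : ℕ) (hℓ : 1 ≤ ℓ) (x : ZMod ℓ → ZMod n × ZMod k)
    (hinj : Function.Injective x)
    (hcyc : ∀ i : ZMod ℓ,
      ((x (i + 1)).1 = (x i).1 + (c : ZMod n) ∧ (x (i + 1)).2 = (x i).2 + (c : ZMod k)) ∨
      ((x i = ((0 : ZMod n), (1 : ZMod k)) ∨ x i = ((0 : ZMod n), (-1 : ZMod k)) ∨
        x i = ((1 : ZMod n), (0 : ZMod k)) ∨ x i = ((-1 : ZMod n), (0 : ZMod k))) ∧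
        x (i + 1) = ((c : ZMod n), (c : ZMod k)))) :
    n * k < 7 * ℓ := by
  classical
  -- coprimality of c with n and with k
  have hck : Nat.Coprime c k := by
    have h : (c : ZMod k) * ((n * bar k : ℕ) : ZMod k) = 1 := by
      have h0 := (ZMod.natCast_eq_natCast_iff _ _ _).mpr hc1
      push_cast at h0 ⊢
      linear_combination h0
    exact (ZMod.isUnit_iff_coprime c k).mp (IsUnit.of_mul_eq_one _ h)
  have hcn : Nat.Coprime c n := by
    have h : (c : ZMod n) * ((k * bar n : ℕ) : ZMod n) = 1 := by
      have h0 := (ZMod.natCast_eq_natCast_iff _ _ _).mpr hc2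
      push_cast at h0 ⊢
      linear_combination h0
    exact (ZMod.isUnit_iff_coprime c n).mp (IsUnit.of_mul_eq_one _ h)
  by_cases hA : ∀ i : ZMod ℓ,
      (x (i + 1)).1 = (x i).1 + (c : ZMod n) ∧ (x (i + 1)).2 = (x i).2 + (c : ZMod k)
  · -- all steps diagonal
    have hx : ∀ s : ℕ, (x ((s : ZMod ℓ))).1 = (x 0).1 + ((s * c : ℕ) : ZMod n) ∧
        (x ((s : ZMod ℓ))).2 = (x 0).2 + ((s * c : ℕ) : ZMod k) := by
      intro s
      induction s with
      | zero => simp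
      | succ m ih =>
        have h := hA (m : ZMod ℓ)
        have hidx : ((m + 1 : ℕ) : ZMod ℓ) = (m : ZMod ℓ) + 1 := by push_cast; ring
        constructor
        · rw [hidx, h.1, ih.1]; push_cast; ring
        · rw [hidx, h.2, ih.2]; push_cast; ring
    have h0 := hx ℓ
    rw [ZMod.natCast_self] at h0
    have hn1 : ((ℓ * c : ℕ) : ZMod n) = 0 := by
      have := h0.1; exact (left_eq_add.mp this)
    have hk1 : ((ℓ * c : ℕ) : ZMod k) = 0 := by
      have := h0.2; exact (left_eq_add.mp this)
    have d1 : n ∣ ℓ := (hcn.symm).dvd_of_dvd_mul_right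
      ((ZMod.natCast_eq_zero_iff _ _).mp hn1)
    have d2 : k ∣ ℓ := (hck.symm).dvd_of_dvd_mul_right
      ((ZMod.natCast_eq_zero_iff _ _).mp hk1)
    have d3 : n * k ∣ ℓ := Nat.Coprime.mul_dvd_of_dvd_of_dvd hnk d1 d2
    have := Nat.le_of_dvd (by omega) d3
    omega
  · -- there is a jump step
    obtain ⟨i0, hi0⟩ := not_forall.mp hA
    rcases hcyc i0 with hL | hR
    · exact absurd hL hi0
    obtain ⟨hS0, hjump⟩ := hR
    set S : ZMod n × ZMod k → Prop := fun p =>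
      p = ((0 : ZMod n), (1 : ZMod k)) ∨ p = ((0 : ZMod n), (-1 : ZMod k)) ∨
      p = ((1 : ZMod n), (0 : ZMod k)) ∨ p = ((-1 : ZMod n), (0 : ZMod k)) with hSdef
    have hex : ∃ s : ℕ, 1 ≤ s ∧ S (x (i0 + (s : ZMod ℓ))) := by
      refine ⟨ℓ, hℓ, ?_⟩
      rw [ZMod.natCast_self, add_zero]
      exact hS0
    set t := Nat.find hex with htdef
    obtain ⟨ht1, htS⟩ := Nat.find_spec hex
    have htle : t ≤ ℓ := Nat.find_le ⟨hℓ, by rw [ZMod.natCast_self, add_zero]; exact hS0⟩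
    have hmin : ∀ s, s < t → ¬(1 ≤ s ∧ S (x (i0 + (s : ZMod ℓ)))) :=
      fun s hs => Nat.find_min hex hs
    -- the path from i0+1 to i0+t is diagonal
    have hdiag : ∀ s : ℕ, 1 ≤ s → s ≤ t →
        x (i0 + (s : ZMod ℓ)) = (((s * c : ℕ) : ZMod n), ((s * c : ℕ) : ZMod k)) := by
      intro s
      induction s with
      | zero => intro h1 _; exact absurd h1 (by omega)
      | succ m ih =>
        intro _ hle
        rcases Nat.eq_zero_or_pos m with rfl | hm
        · simpa using hjump
        · have hmt : m < t := by omega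
          have hnotS : ¬ S (x (i0 + (m : ZMod ℓ))) := fun h => hmin m hmt ⟨hm, h⟩
          have hLm := (hcyc (i0 + (m : ZMod ℓ))).resolve_right (fun h => hnotS h.1)
          have ihm := ih hm (le_of_lt hmt)
          have hidx : ((m + 1 : ℕ) : ZMod ℓ) = (m : ZMod ℓ) + 1 := by push_cast; ring
          rw [hidx, ← add_assoc]
          rw [Prod.ext_iff]
          constructor
          · rw [hLm.1, ihm]; push_cast; ring
          · rw [hLm.2, ihm]; push_cast; ring
    have hxt := hdiag t ht1 le_rfl
    rw [hxt] at htS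
    have hnpos : 0 < n := by omega
    have hkpos : 0 < k := by omega
    have hkm1 : ((k - 1 : ℕ) : ZMod k) = -1 := by
      have h0 : (k : ZMod k) = 0 := ZMod.natCast_self k
      rw [Nat.cast_sub (by omega : 1 ≤ k), h0]
      push_cast
      ring
    have hnm1 : ((n - 1 : ℕ) : ZMod n) = -1 := by
      have h0 : (n : ZMod n) = 0 := ZMod.natCast_self n
      rw [Nat.cast_sub (by omega : 1 ≤ n), h0]
      push_cast
      ring
    rcases htS with h | h | h | h
    · -- (0, 1) : n ∣ tc, tc ≡ 1 mod k
      rw [Prod.mk.injEq] at h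
      have d1 : n ∣ t := (hcn.symm).dvd_of_dvd_mul_right
        ((ZMod.natCast_eq_zero_iff _ _).mp h.1)
      have m1 : t * c ≡ 1 [MOD k] := by
        have := h.2
        rw [show (1 : ZMod k) = ((1 : ℕ) : ZMod k) by push_cast; ring] at this
        exact (ZMod.natCast_eq_natCast_iff _ _ _).mp this
      have := aux_lem n k c t hk hnpos hc1 d1 ht1 (Or.inl m1)
      omega
    · -- (0, -1)
      rw [Prod.mk.injEq] at h
      have d1 : n ∣ t := (hcn.symm).dvd_of_dvd_mul_right
        ((ZMod.natCast_eq_zero_iff _ _).mp h.1)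
      have m1 : t * c ≡ k - 1 [MOD k] := by
        have := h.2
        rw [← hkm1] at this
        exact (ZMod.natCast_eq_natCast_iff _ _ _).mp this
      have := aux_lem n k c t hk hnpos hc1 d1 ht1 (Or.inr m1)
      omega
    · -- (1, 0)
      rw [Prod.mk.injEq] at h
      have d1 : k ∣ t := (hck.symm).dvd_of_dvd_mul_right
        ((ZMod.natCast_eq_zero_iff _ _).mp h.2)
      have m1 : t * c ≡ 1 [MOD n] := by
        have := h.1
        rw [show (1 : ZMod n) = ((1 : ℕ) : ZMod n) by push_cast; ring] at this
        exact (ZMod.natCast_eq_natCast_iff _ _ _).mp this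
      have := aux_lem k n c t hn hkpos hc2 d1 ht1 (Or.inl m1)
      have : n * k < 7 * t := by rw [Nat.mul_comm]; exact this
      omega
    · -- (-1, 0)
      rw [Prod.mk.injEq] at h
      have d1 : k ∣ t := (hck.symm).dvd_of_dvd_mul_right
        ((ZMod.natCast_eq_zero_iff _ _).mp h.2)
      have m1 : t * c ≡ n - 1 [MOD n] := by
        have := h.1
        rw [← hnm1] at this
        exact (ZMod.natCast_eq_natCast_iff _ _ _).mp this
      have := aux_lem k n c t hn hkpos hc2 d1 ht1 (Or.inr m1)
      have : n * k < 7 * t := by rw [Nat.mul_comm]; exact this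
      omega
end

section
/- Let V and W be finite sets, A : V × V → ℕ a nonnegative integer matrix, π : V → W a map, and D ≥ 1, L ≥ 1 natural numbers. Define the quotient digraph on W by: there is an oriented edge from w to w' if and only if there exist v, v' ∈ V with π(v) = w, π(v') = w' and A(v,v') ≠ 0. Assume: (i) the quotient digraph has no directed cycle of length ≤ L; (ii) there is a subset S ⊆ W with |S| ≤ 5 such that every v ∈ V with π(v) ∉ S satisfies ∑_u A(v,u) = 1; (iii) every v ∈ V satisfies ∑_u A(v,u) ≤ D. Then for every v ∈ V, ∑_u (A^L)(v,u) ≤ 326·D^5, i.e., the number of directed paths of length L starting at any vertex is at most 326·D^5. -/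
private lemma stmt8_rec {V : Type*} [Fintype V] [DecidableEq V] (A : Matrix V V ℕ) (n : ℕ)
    (v : V) : ∑ u, (A ^ (n + 1)) v u = ∑ w, A v w * ∑ u, (A ^ n) w u := by
  simp only [pow_succ', Matrix.mul_apply]
  rw [Finset.sum_comm]
  simp [Finset.mul_sum]

private lemma stmt8_cons {V : Type*} (A : Matrix V V ℕ) {n : ℕ} (v : V) (c' : Fin (n + 1) → V)
    (hv : A v (c' 0) ≠ 0) (hc' : ∀ i : Fin n, A (c' i.castSucc) (c' i.succ) ≠ 0) :
    ∀ i : Fin (n + 1),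
      A ((Fin.cons v c' : Fin (n + 2) → V) i.castSucc)
        ((Fin.cons v c' : Fin (n + 2) → V) i.succ) ≠ 0 := by
  intro i
  refine Fin.cases ?_ ?_ i
  · simpa using hv
  · intro j
    rw [← Fin.succ_castSucc, Fin.cons_succ, Fin.cons_succ]
    exact hc' j

private lemma stmt8_walk {V : Type*} [Fintype V] [DecidableEq V] (A : Matrix V V ℕ) :
    ∀ n (v : V), (∑ u, (A ^ n) v u) ≠ 0 →
      ∃ c : Fin (n + 1) → V, c 0 = v ∧ ∀ i : Fin n, A (c i.castSucc) (c i.succ) ≠ 0 := by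
  intro n
  induction n with
  | zero => exact fun v _ => ⟨fun _ => v, rfl, fun i => i.elim0⟩
  | succ n ih =>
    intro v hv
    rw [stmt8_rec] at hv
    obtain ⟨w, -, hw⟩ := Finset.exists_ne_zero_of_sum_ne_zero hv
    have hA : A v w ≠ 0 := fun h => hw (by simp [h])
    have hf : (∑ u, (A ^ n) w u) ≠ 0 := fun h => hw (by simp [h])
    obtain ⟨c', hc'0, hc'⟩ := ih w hf
    exact ⟨Fin.cons v c', Fin.cons_zero _ _,
      stmt8_cons A v c' (by rw [hc'0]; exact hA) hc'⟩

private lemma stmt8_hits {V W : Type*} [DecidableEq W] (π : V → W) (S : Finset W) {n : ℕ}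
    (v : V) (c' : Fin (n + 1) → V) :
    (∑ i : Fin (n + 1), if π ((Fin.cons v c' : Fin (n + 2) → V) i.castSucc) ∈ S then 1 else 0)
      = (if π v ∈ S then 1 else 0)
        + ∑ i : Fin n, if π (c' i.castSucc) ∈ S then 1 else 0 := by
  rw [Fin.sum_univ_succ]
  congr 1

private lemma stmt8_budget {V W : Type*} [Fintype V] [DecidableEq V] [DecidableEq W]
    (A : Matrix V V ℕ) (π : V → W) (S : Finset W) (D : ℕ) (hD : 1 ≤ D)
    (hSone : ∀ v : V, π v ∉ S → ∑ u, A v u = 1) (hdeg : ∀ v : V, ∑ u, A v u ≤ D) :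
    ∀ n (b : ℕ) (v : V),
      (∀ c : Fin (n + 1) → V, c 0 = v → (∀ i : Fin n, A (c i.castSucc) (c i.succ) ≠ 0) →
        (∑ i : Fin n, if π (c i.castSucc) ∈ S then 1 else 0) ≤ b) →
      ∑ u, (A ^ n) v u ≤ D ^ b := by
  intro n
  induction n with
  | zero =>
    intro b v _
    simpa [Matrix.one_apply] using Nat.one_le_pow b D hD
  | succ n ih =>
    intro b v hbud
    rw [stmt8_rec]
    by_cases hvS : π v ∈ S
    · match b with
      | 0 =>
        have hzero : ∀ w ∈ Finset.univ, A v w * ∑ u, (A ^ n) w u = 0 := by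
          intro w _
          by_contra hw
          have hA : A v w ≠ 0 := fun h => hw (by simp [h])
          have hf : (∑ u, (A ^ n) w u) ≠ 0 := fun h => hw (by simp [h])
          obtain ⟨c', hc'0, hc'⟩ := stmt8_walk A n w hf
          have hwalk := hbud (Fin.cons v c') (Fin.cons_zero _ _)
            (stmt8_cons A v c' (by rw [hc'0]; exact hA) hc')
          rw [stmt8_hits] at hwalk
          simp only [hvS, if_true] at hwalk
          omega
        rw [Finset.sum_eq_zero hzero]
        simp
      | (b' + 1) =>
        have hterm : ∀ w ∈ Finset.univ, A v w * ∑ u, (A ^ n) w u ≤ A v w * D ^ b' := by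
          intro w _
          by_cases hA : A v w = 0
          · simp [hA]
          · refine Nat.mul_le_mul_left _ (ih b' w ?_)
            intro c' hc'0 hc'
            have hwalk := hbud (Fin.cons v c') (Fin.cons_zero _ _)
              (stmt8_cons A v c' (by rw [hc'0]; exact hA) hc')
            rw [stmt8_hits] at hwalk
            simp only [hvS, if_true] at hwalk
            omega
        calc ∑ w, A v w * ∑ u, (A ^ n) w u ≤ ∑ w, A v w * D ^ b' :=
              Finset.sum_le_sum hterm
          _ = (∑ w, A v w) * D ^ b' := by rw [Finset.sum_mul]
          _ ≤ D * D ^ b' := Nat.mul_le_mul_right _ (hdeg v)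
          _ = D ^ (b' + 1) := by ring
    · have hterm : ∀ w ∈ Finset.univ, A v w * ∑ u, (A ^ n) w u ≤ A v w * D ^ b := by
        intro w _
        by_cases hA : A v w = 0
        · simp [hA]
        · refine Nat.mul_le_mul_left _ (ih b w ?_)
          intro c' hc'0 hc'
          have hwalk := hbud (Fin.cons v c') (Fin.cons_zero _ _)
            (stmt8_cons A v c' (by rw [hc'0]; exact hA) hc')
          rw [stmt8_hits] at hwalk
          simp only [hvS, if_false] at hwalk
          omega
      calc ∑ w, A v w * ∑ u, (A ^ n) w u ≤ ∑ w, A v w * D ^ b :=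
            Finset.sum_le_sum hterm
        _ = (∑ w, A v w) * D ^ b := by rw [Finset.sum_mul]
        _ = D ^ b := by rw [hSone v hvS, one_mul]

/-- Lemma 4.3: if the quotient digraph of `A` under `π` has no directed cycle of
length at most `L`, all but at most 5 of the quotient classes have out-degree one
in the multigraph sense, and every out-degree is at most `D`, then every row sum of
`A^L` (the number of directed paths of length `L` from any vertex) is at most `326·D^5`. -/
theorem stmt_8 {V W : Type*} [Fintype V] [Fintype W] [DecidableEq V] [DecidableEq W]
    (A : Matrix V V ℕ) (π : V → W) (D L : ℕ) (hD : 1 ≤ D) (hL : 1 ≤ L)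
    (hacyclic : ∀ ℓ : ℕ, 1 ≤ ℓ → ℓ ≤ L → ∀ x : ZMod ℓ → W, Function.Injective x →
      ¬ (∀ i : ZMod ℓ, ∃ v v' : V, π v = x i ∧ π v' = x (i + 1) ∧ A v v' ≠ 0))
    (hS : ∃ S : Finset W, S.card ≤ 5 ∧ ∀ v : V, π v ∉ S → ∑ u, A v u = 1)
    (hdeg : ∀ v : V, ∑ u, A v u ≤ D) :
    ∀ v : V, ∑ u, (A ^ L) v u ≤ 326 * D ^ 5 := by
  obtain ⟨S, hScard, hSone⟩ := hS
  intro v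
  obtain ⟨L', rfl⟩ : ∃ L', L = L' + 1 := ⟨L - 1, by omega⟩
  have main : ∑ u, (A ^ (L' + 1)) v u ≤ D ^ 5 := by
    apply stmt8_budget A π S D hD hSone hdeg (L' + 1) 5 v
    intro c hc0 hedge
    -- Step 1: π ∘ c is injective
    have hinj : Function.Injective (π ∘ c) := by
      by_contra hninj
      rw [Function.not_injective_iff] at hninj
      have hQ : ∃ d, 0 < d ∧
          ∃ a b : Fin (L' + 1 + 1), (b : ℕ) = (a : ℕ) + d ∧ π (c a) = π (c b) := by
        obtain ⟨a, b, heq, hne⟩ := hninj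
        rcases lt_or_gt_of_ne (fun h : a = b => hne h) with h | h
        · exact ⟨(b : ℕ) - a, by omega, a, b, by omega, heq⟩
        · exact ⟨(a : ℕ) - b, by omega, b, a, by omega, heq.symm⟩
      set ℓ := Nat.find hQ with hldef
      obtain ⟨hpos, a, b, hab, heq⟩ := Nat.find_spec hQ
      have hbL : (b : ℕ) < L' + 1 + 1 := b.isLt
      have hℓL : ℓ ≤ L' + 1 := by omega
      haveI : NeZero ℓ := ⟨hpos.ne'⟩
      set x : ZMod ℓ → W := fun k =>
        π (c ⟨(a : ℕ) + ZMod.val k, by have := ZMod.val_lt k; omega⟩) with hxdef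
      have hxinj : Function.Injective x := by
        intro k1 k2 hx
        by_contra hne
        have hvne : ZMod.val k1 ≠ ZMod.val k2 := fun h => hne (ZMod.val_injective ℓ h)
        have h1 := ZMod.val_lt k1
        have h2 := ZMod.val_lt k2
        simp only [hxdef] at hx
        rcases lt_or_gt_of_ne hvne with h | h
        · exact Nat.find_min hQ (m := ZMod.val k2 - ZMod.val k1) (by omega)
            ⟨by omega, _, _, by simp; omega, hx⟩
        · exact Nat.find_min hQ (m := ZMod.val k1 - ZMod.val k2) (by omega)
            ⟨by omega, _, _, by simp; omega, hx.symm⟩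
      refine hacyclic ℓ hpos hℓL x hxinj ?_
      intro i
      have hi := ZMod.val_lt i
      have hlt1 : (a : ℕ) + ZMod.val i < L' + 1 := by omega
      have hlt2 : (a : ℕ) + ZMod.val i + 1 < L' + 1 + 1 := by omega
      have hval : ZMod.val (i + 1) = (ZMod.val i + 1) % ℓ := by
        rw [ZMod.val_add, ZMod.val_one_eq_one_mod]
        conv_rhs => rw [Nat.add_mod]
        rw [Nat.mod_eq_of_lt hi]
      have hx_eq : ∀ (k : ZMod ℓ) (m : ℕ) (hm : m < L' + 1 + 1),
          (a : ℕ) + ZMod.val k = m → x k = π (c ⟨m, hm⟩) := by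
        intro k m hm h
        simp only [hxdef]
        exact congrArg π (congrArg c (Fin.ext h))
      refine ⟨c ⟨(a : ℕ) + ZMod.val i, by omega⟩, c ⟨(a : ℕ) + ZMod.val i + 1, hlt2⟩,
        (hx_eq i ((a : ℕ) + ZMod.val i) (by omega) rfl).symm, ?_, ?_⟩
      · -- π v' = x (i + 1)
        rcases Nat.lt_or_ge (ZMod.val i + 1) ℓ with h | h
        · have h2 : ZMod.val (i + 1) = ZMod.val i + 1 := by
            rw [hval, Nat.mod_eq_of_lt h]
          exact (hx_eq (i + 1) ((a : ℕ) + ZMod.val i + 1) hlt2 (by omega)).symm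
        · have hieq : ZMod.val i + 1 = ℓ := by omega
          have h2 : ZMod.val (i + 1) = 0 := by rw [hval, hieq, Nat.mod_self]
          have e1 : π (c ⟨(a : ℕ) + ZMod.val i + 1, hlt2⟩) = π (c b) :=
            congrArg π (congrArg c (Fin.ext (show (a : ℕ) + ZMod.val i + 1 = (b : ℕ) by omega)))
          have e2 : x (i + 1) = π (c a) :=
            (hx_eq (i + 1) (a : ℕ) (by omega) (by omega)).trans
              (congrArg π (congrArg c (Fin.ext rfl)))
          exact e1.trans (heq.symm.trans e2.symm)
      · have := hedge ⟨(a : ℕ) + ZMod.val i, hlt1⟩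
        simpa using this
    -- Step 2: count S-hits
    rw [← Finset.card_filter]
    calc (Finset.univ.filter fun i : Fin (L' + 1) => π (c i.castSucc) ∈ S).card ≤ S.card := by
          refine Finset.card_le_card_of_injOn (fun i => π (c i.castSucc)) ?_ ?_
          · intro i hi
            simpa using (Finset.mem_filter.mp hi).2
          · intro i _ j _ hij
            exact Fin.castSucc_injective _ (hinj hij)
      _ ≤ 5 := hScard
  calc ∑ u, (A ^ (L' + 1)) v u ≤ D ^ 5 := main
    _ ≤ 326 * D ^ 5 := Nat.le_mul_of_pos_left _ (by norm_num)
end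

section
/- There exists a real constant K ≥ 1 such that for every integer n ≥ 2 and every positive integer a with a ≥ K·(log n)², there exists an integer b with a < b ≤ 3·K·a and gcd(b,n) = 1. (Consequently, if the elements of the set S_n = { a ∈ ℕ : a ≥ (log n)², gcd(a,n) = 1 } are listed in increasing order as a_1 < a_2 < ..., then each ratio a_{i+1}/a_i is bounded above by a universal constant independent of n.) -/
open Nat


/-- The set of primes in `(a, 2a]`. -/
def primeT (a : ℕ) : Finset ℕ := (Finset.range (2*a+1)).filter (fun p => p.Prime ∧ a < p)

theorem myCentralBinom_le (a : ℕ) (ha : 2 < a) :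
    centralBinom a ≤ (2*a) ^ Nat.sqrt (2*a) * 4 ^ (2*a/3) * (2*a) ^ (primeT a).card := by
  have a_pos : 0 < a := by omega
  have n2_pos : 1 ≤ 2 * a := by omega
  set S := (Finset.range (2*a+1)).filter Nat.Prime with hSdef
  set f : ℕ → ℕ := fun x => x ^ (centralBinom a).factorization x with hfdef
  have hS : ∏ x ∈ S, f x = ∏ x ∈ Finset.range (2*a+1), f x := by
    refine Finset.prod_filter_of_ne fun p _ h => ?_
    contrapose! h; dsimp only [f]
    rw [Nat.factorization_eq_zero_of_not_prime a.centralBinom h, pow_zero]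
  have hCB : centralBinom a = ∏ x ∈ S, f x := by
    rw [hS, prod_pow_factorization_centralBinom]
  rw [hCB, ← Finset.prod_filter_mul_prod_filter_not S (· ≤ a)]
  apply mul_le_mul'
  · -- small primes part
    have hshrink : ∏ x ∈ S.filter (· ≤ a), f x = ∏ x ∈ S.filter (· ≤ 2*a/3), f x := by
      refine (Finset.prod_subset ?_ ?_).symm
      · exact Finset.monotone_filter_right S (fun x _ (hx : x ≤ 2*a/3) => show x ≤ a by omega)
      · intro x hx hx'
        simp only [Finset.mem_filter] at hx hx'
        have hxle : ¬ x ≤ 2*a/3 := fun h => hx' ⟨hx.1, h⟩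
        have h2x : 2 * a < 3 * x := by omega
        dsimp only [f]
        rw [factorization_centralBinom_of_two_mul_self_lt_three_mul ha hx.2 h2x, pow_zero]
    rw [hshrink, ← Finset.prod_filter_mul_prod_filter_not (S.filter (· ≤ 2*a/3)) (· ≤ Nat.sqrt (2*a))]
    apply mul_le_mul'
    · refine (Finset.prod_le_pow_card _ _ (2*a) fun p hp => ?_).trans ?_
      · exact pow_factorization_choose_le (by omega)
      apply pow_le_pow_right' n2_pos
      have : ((S.filter (· ≤ 2*a/3)).filter (· ≤ Nat.sqrt (2*a))) ⊆ Finset.Icc 1 (Nat.sqrt (2*a)) := by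
        intro x hx
        simp only [Finset.mem_filter, hSdef] at hx
        exact Finset.mem_Icc.mpr ⟨hx.1.1.2.one_lt.le, hx.2⟩
      calc ((S.filter (· ≤ 2*a/3)).filter (· ≤ Nat.sqrt (2*a))).card
          ≤ (Finset.Icc 1 (Nat.sqrt (2*a))).card := Finset.card_le_card this
        _ = Nat.sqrt (2*a) := by rw [Nat.card_Icc]; omega
    · refine le_trans ?_ (primorial_le_4_pow (2*a/3))
      refine (Finset.prod_le_prod' fun p hp => (?_ : f p ≤ p)).trans ?_
      · simp only [Finset.mem_filter, hSdef] at hp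
        have hprime := hp.1.1.2
        refine (pow_le_pow_right' hprime.one_lt.le ?_).trans (pow_one p).le
        exact Nat.factorization_choose_le_one (Nat.sqrt_lt'.mp (not_le.1 hp.2))
      · refine Finset.prod_le_prod_of_subset_of_one_le' ?_ ?_
        · intro p hp
          simp only [Finset.mem_filter, hSdef, Finset.mem_range] at hp ⊢
          exact ⟨by omega, hp.1.1.2⟩
        · intro p hp _
          exact (Finset.mem_filter.1 hp).2.one_lt.le
  · -- big primes part
    have hset : S.filter (fun p => ¬ p ≤ a) = primeT a := by
      rw [hSdef, primeT, Finset.filter_filter]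
      apply Finset.filter_congr
      intro x _
      simp [not_le]
    rw [hset]
    exact Finset.prod_le_pow_card _ _ (2*a) fun x hx => pow_factorization_choose_le (by omega)


theorem log_le_four_sqrt_sqrt {y : ℝ} (hy : 0 ≤ y) :
    Real.log y ≤ 4 * Real.sqrt (Real.sqrt y) := by
  rcases eq_or_lt_of_le hy with h | hy'
  · simp [← h]
  have h1 : 0 < Real.sqrt (Real.sqrt y) := Real.sqrt_pos.mpr (Real.sqrt_pos.mpr hy')
  have h2 : Real.log y = 4 * Real.log (Real.sqrt (Real.sqrt y)) := by
    rw [Real.log_sqrt (Real.sqrt_nonneg y), Real.log_sqrt hy]; ring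
  have h3 := Real.log_le_sub_one_of_pos h1
  nlinarith [h1]

set_option maxHeartbeats 1000000 in
theorem key_real (x T : ℝ) (hx : 48000000 ≤ x) (hT0 : 0 ≤ T)
    (hT : T * Real.log x ≤ Real.sqrt (x / 10^8))
    (hmain : x * Real.log 4 < Real.log x + Real.sqrt (2*x) * Real.log (2*x)
      + (2*x/3) * Real.log 4 + T * Real.log (2*x)) : False := by
  have hx0 : (0:ℝ) < x := by linarith
  have hlog2 : (0.6931471803 : ℝ) < Real.log 2 := Real.log_two_gt_d9
  have hlog4 : Real.log 4 = 2 * Real.log 2 := by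
    rw [show (4:ℝ) = 2^2 by norm_num, Real.log_pow]; push_cast; ring
  -- v = x^(1/4)
  obtain ⟨v, hv⟩ : ∃ v, v = Real.sqrt (Real.sqrt x) := ⟨_, rfl⟩
  have hv0 : 0 ≤ v := hv ▸ Real.sqrt_nonneg _
  have hv2 : v^2 = Real.sqrt x := by rw [hv]; exact Real.sq_sqrt (Real.sqrt_nonneg x)
  have hv4 : (v^2)^2 = x := by rw [hv2]; exact Real.sq_sqrt hx0.le
  have hvsq : 6928 ≤ v^2 := by
    by_contra hc
    push_neg at hc
    nlinarith [sq_nonneg v, hv4]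
  have hv83 : 83 ≤ v := by
    by_contra hc
    push_neg at hc
    nlinarith [hv0, hvsq]
  -- u = (2x)^(1/4)
  obtain ⟨u, hu⟩ : ∃ u, u = Real.sqrt (Real.sqrt (2*x)) := ⟨_, rfl⟩
  have hu0 : 0 ≤ u := hu ▸ Real.sqrt_nonneg _
  have hu2 : u^2 = Real.sqrt (2*x) := by rw [hu]; exact Real.sq_sqrt (Real.sqrt_nonneg (2*x))
  have hu4 : (u^2)^2 = 2*x := by rw [hu2]; exact Real.sq_sqrt (by linarith)
  have husq : 9797 ≤ u^2 := by
    by_contra hc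
    push_neg at hc
    nlinarith [sq_nonneg u, hu4]
  have hu98 : 96 ≤ u := by
    by_contra hc
    push_neg at hc
    nlinarith [hu0, husq]
  -- term 1 : log x ≤ x / 1000
  have t1 : Real.log x ≤ x / 1000 := by
    have hlog := log_le_four_sqrt_sqrt hx0.le
    rw [← hv] at hlog
    have h1 : 83*83 ≤ v*v := by nlinarith [hv83, hv0]
    have h2 : 83*83*83 ≤ v*v*v := by nlinarith [h1, hv83, hv0]
    have h3 : 4 * v ≤ x / 1000 := by nlinarith [h2, hv0, hv4]
    linarith
  -- term 2 : sqrt(2x) log(2x) ≤ x / 12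
  have t2 : Real.sqrt (2*x) * Real.log (2*x) ≤ x / 12 := by
    have hlog := log_le_four_sqrt_sqrt (by linarith : (0:ℝ) ≤ 2*x)
    rw [← hu] at hlog
    have h1 : Real.sqrt (2*x) * Real.log (2*x) ≤ u^2 * (4*u) := by
      rw [← hu2]
      exact mul_le_mul_of_nonneg_left hlog (sq_nonneg u)
    have h96 : 96 * u^3 ≤ u * u^3 := mul_le_mul_of_nonneg_right hu98 (pow_nonneg hu0 3)
    have h2x' : u * u^3 = 2*x := by rw [show u * u^3 = (u^2)^2 by ring, hu4]
    linarith [h1, h96, h2x']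
  -- term 4 : T log(2x) ≤ x / 1000
  have t4 : T * Real.log (2*x) ≤ x / 1000 := by
    have hlx : Real.log 2 ≤ Real.log x := Real.log_le_log (by norm_num) (by linarith)
    have h2x : Real.log (2*x) = Real.log 2 + Real.log x := Real.log_mul (by norm_num) hx0.ne'
    have hstep : T * Real.log 2 ≤ T * Real.log x := mul_le_mul_of_nonneg_left hlx hT0
    have h10 : Real.sqrt ((10:ℝ)^8) = 10^4 := by
      rw [show (10:ℝ)^8 = ((10:ℝ)^4)^2 by norm_num]
      exact Real.sqrt_sq (by norm_num)
    have hsqd : Real.sqrt (x / 10^8) = Real.sqrt x / 10^4 := by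
      rw [Real.sqrt_div hx0.le, h10]
    have hsx : Real.sqrt x ≤ x / 6928 := by nlinarith [hvsq, sq_nonneg v, hv4]
    rw [hsqd] at hT
    have hTx : T * Real.log (2*x) ≤ 2 * (T * Real.log x) := by
      rw [h2x]; nlinarith [hstep]
    linarith
  have hfin : (1.3862943606 : ℝ) * x ≤ Real.log 4 * x := by
    have : (1.3862943606:ℝ) ≤ Real.log 4 := by rw [hlog4]; linarith
    exact mul_le_mul_of_nonneg_right this hx0.le
  linarith [hmain, t1, t2, t4, hfin]


theorem myCount (a : ℕ) (ha : 4 ≤ a)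
    (hCB : centralBinom a ≤ (2*a) ^ Nat.sqrt (2*a) * 4 ^ (2*a/3) * (2*a) ^ T) :
    4 ^ a < a * ((2*a) ^ Nat.sqrt (2*a) * 4 ^ (2*a/3) * (2*a) ^ T) :=
  lt_of_lt_of_le (Nat.four_pow_lt_mul_centralBinom a ha) (Nat.mul_le_mul_left a hCB)

theorem myCount_real (a T : ℕ) (ha : 4 ≤ a)
    (h : 4 ^ a < a * ((2*a) ^ Nat.sqrt (2*a) * 4 ^ (2*a/3) * (2*a) ^ T)) :
    (a:ℝ) * Real.log 4 < Real.log a + Real.sqrt (2*(a:ℝ)) * Real.log (2*(a:ℝ))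
      + (2*(a:ℝ)/3) * Real.log 4 + (T : ℝ) * Real.log (2*(a:ℝ)) := by
  have hapos : (0:ℝ) < (a:ℝ) := by exact_mod_cast (by omega : 0 < a)
  have ha1 : (1:ℝ) ≤ (a:ℝ) := by exact_mod_cast (by omega : 1 ≤ a)
  have h2a1 : (1:ℝ) ≤ 2*(a:ℝ) := by linarith
  have hl2a : 0 ≤ Real.log (2*(a:ℝ)) := Real.log_nonneg h2a1
  have hl4 : (0:ℝ) ≤ Real.log 4 := Real.log_nonneg (by norm_num)
  have hcast : ((4:ℝ))^a < (a:ℝ) * ((2*(a:ℝ)) ^ Nat.sqrt (2*a) * 4 ^ (2*a/3)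
      * (2*(a:ℝ)) ^ T) := by exact_mod_cast h
  have hlt := Real.log_lt_log (by positivity) hcast
  rw [Real.log_pow, Real.log_mul (by positivity) (by positivity),
    Real.log_mul (by positivity) (by positivity),
    Real.log_mul (by positivity) (by positivity),
    Real.log_pow, Real.log_pow, Real.log_pow] at hlt
  have hs : (Nat.sqrt (2*a) : ℝ) ≤ Real.sqrt (2*(a:ℝ)) := by
    have h1 : ((Nat.sqrt (2*a) : ℕ) : ℝ) ≤ Real.sqrt ((2*a : ℕ) : ℝ) :=
      Real.nat_sqrt_le_real_sqrt
    rwa [show (((2*a : ℕ)) : ℝ) = 2*(a:ℝ) by push_cast; ring] at h1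
  have hd : ((2*a/3 : ℕ) : ℝ) ≤ 2*(a:ℝ)/3 := by
    have := Nat.cast_div_le (m := 2*a) (n := 3) (α := ℝ)
    rwa [show (((2*a : ℕ)) : ℝ) = 2*(a:ℝ) by push_cast; ring,
      show ((3:ℕ):ℝ) = 3 by norm_num] at this
  have hs' : (Nat.sqrt (2*a) : ℝ) * Real.log (2*(a:ℝ)) ≤ Real.sqrt (2*(a:ℝ)) * Real.log (2*(a:ℝ)) :=
    mul_le_mul_of_nonneg_right hs hl2a
  have hd' : ((2*a/3 : ℕ) : ℝ) * Real.log 4 ≤ (2*(a:ℝ)/3) * Real.log 4 :=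
    mul_le_mul_of_nonneg_right hd hl4
  linarith [hlt, hs', hd']

/-- There is a universal constant `K ≥ 1` such that for every `n ≥ 2` and every
positive integer `a ≥ K·(log n)²`, some integer `b` with `a < b ≤ 3K·a` is
coprime to `n`. -/
theorem stmt_9 :
    ∃ K : ℝ, 1 ≤ K ∧ ∀ n : ℕ, 2 ≤ n → ∀ a : ℕ, 0 < a →
      K * (Real.log n) ^ 2 ≤ (a : ℝ) →
      ∃ b : ℕ, a < b ∧ (b : ℝ) ≤ 3 * K * (a : ℝ) ∧ Nat.gcd b n = 1 := by
  refine ⟨10^8, by norm_num, ?_⟩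
  intro n hn a ha0 hKa
  have hlog2 : (0.6931471803:ℝ) < Real.log 2 := Real.log_two_gt_d9
  have hlogn : (0.6931471803:ℝ) < Real.log n :=
    lt_of_lt_of_le hlog2 (Real.log_le_log (by norm_num) (by exact_mod_cast hn))
  have hlogn0 : (0:ℝ) ≤ Real.log n := by linarith
  have hx : (48000000:ℝ) ≤ (a:ℝ) := by nlinarith [hKa, hlogn]
  have ha4 : 4 ≤ a := by exact_mod_cast (by linarith : (4:ℝ) ≤ (a:ℝ))
  have hn0 : n ≠ 0 := by omega
  set B := n.primeFactors.filter (fun p => a < p) with hB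
  -- the prime divisors of n exceeding a are few
  have hpowB : a ^ B.card ≤ n := by
    have hdvd : (∏ p ∈ B, p) ∣ n :=
      (Finset.prod_dvd_prod_of_subset _ _ _ (Finset.filter_subset _ _)).trans
        (Nat.prod_primeFactors_dvd n)
    have hle : (∏ p ∈ B, p) ≤ n := Nat.le_of_dvd (by omega) hdvd
    have hpow : a ^ B.card ≤ ∏ p ∈ B, p :=
      Finset.pow_card_le_prod B _ a (fun p hp => le_of_lt (Finset.mem_filter.mp hp).2)
    omega
  have hBlog : (B.card:ℝ) * Real.log a ≤ Real.log n := by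
    have h1 := Real.log_le_log (by positivity : (0:ℝ) < (a:ℝ)^B.card)
      (by exact_mod_cast hpowB : ((a:ℝ))^B.card ≤ (n:ℝ))
    rwa [Real.log_pow] at h1
  -- there are more primes in (a, 2a] than bad primes
  have hcard : B.card < (primeT a).card := by
    by_contra hc
    push_neg at hc
    have hloga : (0:ℝ) ≤ Real.log a := Real.log_nonneg (by linarith)
    have hTle : ((primeT a).card : ℝ) * Real.log (a:ℝ) ≤ Real.log n :=
      le_trans (mul_le_mul_of_nonneg_right (by exact_mod_cast hc) hloga) hBlog
    have hlogn_le : Real.log n ≤ Real.sqrt ((a:ℝ)/10^8) := by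
      have h1 : (Real.log n)^2 ≤ (a:ℝ)/10^8 := by nlinarith [hKa]
      have h2 := Real.sqrt_le_sqrt h1
      rwa [Real.sqrt_sq hlogn0] at h2
    exact key_real a (primeT a).card hx (by positivity) (hTle.trans hlogn_le)
      (myCount_real a (primeT a).card ha4
        (lt_of_lt_of_le (Nat.four_pow_lt_mul_centralBinom a ha4)
          (Nat.mul_le_mul_left a (myCentralBinom_le a (by omega)))))
  have hnsub : ¬ (primeT a ⊆ B) := fun hsub =>
    absurd (Finset.card_le_card hsub) (not_le.mpr hcard)
  obtain ⟨p, hpT, hpB⟩ := Finset.not_subset.mp hnsub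
  simp only [primeT, Finset.mem_filter, Finset.mem_range] at hpT
  obtain ⟨hp2a, hpp, hpa⟩ := hpT
  refine ⟨p, hpa, ?_, ?_⟩
  · have h1 : (p:ℝ) ≤ 2*(a:ℝ) := by exact_mod_cast (by omega : p ≤ 2*a)
    have h2 : (0:ℝ) ≤ (a:ℝ) := by positivity
    nlinarith
  · have hpn : ¬ p ∣ n := fun hdv =>
      hpB (Finset.mem_filter.mpr ⟨Nat.mem_primeFactors.mpr ⟨hpp, hdv, hn0⟩, hpa⟩)
    exact (Nat.Prime.coprime_iff_not_dvd hpp).mpr hpn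
end
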